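/- Let p be an odd prime with p ≡ 3 (mod 4), and let d be an odd positive integer coprime to p-1. Then the permutation of F_p given by x ↦ x^d is an even permutation. -/

import Mathlib

open Equiv Equiv.Perm

private def mulUnitPerm {M : Type*} [Monoid M] (u : Mˣ) : Equiv.Perm M where
  toFun := fun x => (u : M) * x
  invFun := fun x => ((u⁻¹ : Mˣ) : M) * x
  left_inv := fun x => by simp [← mul_assoc]
  right_inv := fun x => by simp [← mul_assoc]

private lemma key_lemma (n d : ℕ) [NeZero n] (hn : n % 4 = 2) (hd : d % 2 = 1)
    (hcop : Nat.Coprime d n) (π : Equiv.Perm (ZMod n)) (hπ : ∀ k, π k = (d : ZMod n) * k) :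
    Equiv.Perm.sign π = 1 := by
  obtain ⟨m, rfl⟩ : ∃ m, n = 2 * m := ⟨n / 2, by omega⟩
  have hm : Odd m := Nat.odd_iff.mpr (by omega)
  haveI : NeZero m := ⟨by omega⟩
  have hcm : Nat.Coprime 2 m := Nat.coprime_two_left.mpr hm
  have hdm : Nat.Coprime d m := hcop.coprime_dvd_right ⟨2, by ring⟩
  set u : (ZMod m)ˣ := ZMod.unitOfCoprime d hdm with hu
  set π₂ : Equiv.Perm (ZMod 2 × ZMod m) :=
    Equiv.prodCongrRight (fun _ => mulUnitPerm u) with hπ₂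
  have hd2 : (d : ZMod 2) = 1 := by
    rw [← ZMod.natCast_mod, hd, Nat.cast_one]
  have hcomm : ∀ k, (ZMod.chineseRemainder hcm) (π k) =
      π₂ ((ZMod.chineseRemainder hcm) k) := by
    intro k
    rw [hπ k, map_mul, map_natCast]
    ext
    · simp [π₂, Equiv.prodCongrRight, hd2]
    · simp [π₂, Equiv.prodCongrRight, mulUnitPerm, u, ZMod.coe_unitOfCoprime]
  have := Equiv.Perm.sign_eq_sign_of_equiv π π₂ (ZMod.chineseRemainder hcm).toEquiv hcomm
  rw [this, hπ₂, Equiv.Perm.sign_prodCongrRight]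
  rw [Finset.prod_const]
  have hcard : (Finset.univ : Finset (ZMod 2)).card = 2 := by
    simp [ZMod.card]
  rw [hcard, Int.units_sq]

theorem stmt_6 (p d : ℕ) (hp : p.Prime) [NeZero p] (hp4 : p % 4 = 3)
    (hdodd : Odd d) (hdpos : 0 < d) (hcop : Nat.Coprime d (p - 1))
    (σ : Equiv.Perm (ZMod p)) (hσ : ∀ x, σ x = x ^ d) :
    Equiv.Perm.sign σ = 1 := by
  haveI := Fact.mk hp
  have hp3 : 3 ≤ p := by
    rcases Nat.lt_or_ge p 3 with h | h
    · interval_cases p <;> omega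
    · exact h
  haveI : NeZero (p - 1) := ⟨by omega⟩
  have hσ0 : σ 0 = 0 := by rw [hσ]; exact zero_pow hdpos.ne'
  have h₁ : ∀ x : ZMod p, σ x ≠ 0 ↔ x ≠ 0 := by
    intro x
    rw [hσ]
    simp [pow_eq_zero_iff hdpos.ne']
  have hsub : Equiv.Perm.sign (σ.subtypePerm h₁) = Equiv.Perm.sign σ :=
    Equiv.Perm.sign_subtypePerm σ (p := fun x => x ≠ 0) h₁ (fun x hx => by
      intro h0; exact hx (by rw [h0, hσ0]))
  obtain ⟨g, hg⟩ := IsCyclic.exists_generator (α := (ZMod p)ˣ)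
  have horder : orderOf g = p - 1 := by
    rw [orderOf_eq_card_of_forall_mem_zpowers hg, Nat.card_eq_fintype_card, ZMod.card_units]
  have card_eq : Fintype.card (ZMod (p - 1)) = Fintype.card (ZMod p)ˣ := by
    rw [ZMod.card, ZMod.card_units]
  set f : ZMod (p - 1) → (ZMod p)ˣ := fun k => g ^ k.val with hf
  have hinj : Function.Injective f := by
    intro a b hab
    have h := pow_eq_pow_iff_modEq.mp hab
    rw [horder] at h
    have ha := ZMod.val_lt a
    have hb := ZMod.val_lt b
    have : a.val = b.val := by
      unfold Nat.ModEq at h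
      rwa [Nat.mod_eq_of_lt ha, Nat.mod_eq_of_lt hb] at h
    exact ZMod.val_injective _ this
  have hbij : Function.Bijective f :=
    (Fintype.bijective_iff_injective_and_card f).mpr ⟨hinj, card_eq⟩
  set e : ZMod (p - 1) ≃ (ZMod p)ˣ := Equiv.ofBijective f hbij with he
  set e' : ZMod (p - 1) ≃ {x : ZMod p // x ≠ 0} := e.trans unitsEquivNeZero with he'
  set π : Equiv.Perm (ZMod (p - 1)) := mulUnitPerm (ZMod.unitOfCoprime d hcop) with hπdef
  have hπ : ∀ k, π k = (d : ZMod (p - 1)) * k := by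
    intro k
    simp [π, mulUnitPerm, ZMod.coe_unitOfCoprime]
  have hpowmod : ∀ a b : ℕ, g ^ (a % (p - 1) * b % (p - 1)) = g ^ (a * b) := by
    intro a b
    rw [← horder, pow_mod_orderOf, horder]
    exact pow_eq_pow_iff_modEq.mpr (by
      rw [horder]
      exact (Nat.mod_modEq a (p - 1)).mul_right b)
  have hcomm : ∀ k, e' (π k) = (σ.subtypePerm h₁) (e' k) := by
    intro k
    apply Subtype.ext
    have lhs : ((e' (π k)) : ZMod p) = ((g ^ ((d : ZMod (p - 1)) * k).val : (ZMod p)ˣ) : ZMod p) := by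
      rw [hπ k]; rfl
    have rhs : (((σ.subtypePerm h₁) (e' k)) : ZMod p) = σ (g ^ k.val : (ZMod p)ˣ) := rfl
    rw [lhs, rhs, hσ]
    have : ((d : ZMod (p - 1)) * k).val = d % (p - 1) * k.val % (p - 1) := by
      rw [ZMod.val_mul, ZMod.val_natCast]
    rw [this]
    push_cast [hpowmod d k.val, pow_mul]
    rw [← pow_mul, ← pow_mul, Nat.mul_comm]
  have hs2 : Equiv.Perm.sign π = Equiv.Perm.sign (σ.subtypePerm h₁) :=
    Equiv.Perm.sign_eq_sign_of_equiv π (σ.subtypePerm h₁) e' hcomm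
  rw [← hsub, ← hs2]
  exact key_lemma (p - 1) d (by omega) (Nat.odd_iff.mp hdodd) hcop π hπ
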